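/- arXiv:1703.06867 — 5 statements merged into one kernel-verified Lean document; each statement's English description precedes it below -/
import Mathlib

section
/- For every zonoid Y in ℝ^N there exists a sequence of zonotopes Z_k, k ∈ ℕ, such that Z_k ⊇ Z_{k+1} ⊇ Y for all k and Z_k converges to Y in the Hausdorff metric as k → ∞. -/
open Filter Set MeasureTheory Metric
open scoped Topology Pointwise ENNReal NNReal

noncomputable section

/-- Euclidean space `ℝ^N`. -/
abbrev EucN (N : ℕ) := EuclideanSpace ℝ (Fin N)

/-- A function `f : ℝ^N → [0,∞)` is quasi-concave if it is nonnegative and every super-level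
set `{x : t ≤ f x}` for `t > 0` is either empty or a convex body (compact and convex). -/
def QuasiConcave {N : ℕ} (f : EucN N → ℝ) : Prop :=
  (∀ x, 0 ≤ f x) ∧
    ∀ t : ℝ, 0 < t →
      {x | t ≤ f x} = ∅ ∨ (IsCompact {x | t ≤ f x} ∧ Convex ℝ {x | t ≤ f x})

/-- A valuation on the space `C^N` of quasi-concave functions. -/
def IsValuationQC {N : ℕ} (μ : (EucN N → ℝ) → ℝ) : Prop :=
  μ 0 = 0 ∧
    ∀ f g : EucN N → ℝ, QuasiConcave f → QuasiConcave g → QuasiConcave (f ⊔ g) →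
      μ (f ⊔ g) + μ (f ⊓ g) = μ f + μ g

/-- Continuity of a valuation on `C^N`: convergence of values along pointwise monotone,
pointwise convergent sequences of quasi-concave functions. -/
def ContinuousVal {N : ℕ} (μ : (EucN N → ℝ) → ℝ) : Prop :=
  ∀ (F : ℕ → EucN N → ℝ) (f : EucN N → ℝ),
    (∀ i, QuasiConcave (F i)) → QuasiConcave f →
    ((∀ x, Monotone fun i => F i x) ∨ (∀ x, Antitone fun i => F i x)) →
    (∀ x, Tendsto (fun i => F i x) atTop (𝓝 (f x))) →
    Tendsto (fun i => μ (F i)) atTop (𝓝 (μ f))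

/-- Translation invariance of a valuation on `C^N`. -/
def TransInvVal {N : ℕ} (μ : (EucN N → ℝ) → ℝ) : Prop :=
  ∀ f : EucN N → ℝ, QuasiConcave f → ∀ x₀ : EucN N, μ (fun x => f (x - x₀)) = μ f

/-- `k`-homogeneity of a valuation on `C^N`: `μ (f(·/λ)) = λ^k μ(f)`. -/
def HomogVal {N : ℕ} (k : ℕ) (μ : (EucN N → ℝ) → ℝ) : Prop :=
  ∀ f : EucN N → ℝ, QuasiConcave f → ∀ l : ℝ, 0 < l →
    μ (fun x => f (l⁻¹ • x)) = l ^ k * μ f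

/-- Evenness of a valuation on `C^N`: `μ (f(-·)) = μ f`. -/
def EvenVal {N : ℕ} (μ : (EucN N → ℝ) → ℝ) : Prop :=
  ∀ f : EucN N → ℝ, QuasiConcave f → μ (fun x => f (-x)) = μ f

/-- A convex body of `ℝ^N`: a nonempty compact convex set. -/
def IsConvexBody {N : ℕ} (K : Set (EucN N)) : Prop :=
  K.Nonempty ∧ IsCompact K ∧ Convex ℝ K

/-- A valuation on the space `K^N` of convex bodies of `ℝ^N`. -/
def IsValuationBody {N : ℕ} (μ : Set (EucN N) → ℝ) : Prop :=
  μ ∅ = 0 ∧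
    ∀ K L : Set (EucN N), IsConvexBody K → IsConvexBody L → IsConvexBody (K ∪ L) →
      μ (K ∪ L) + μ (K ∩ L) = μ K + μ L

/-- A zonotope: a Minkowski sum of finitely many segments. -/
def IsZonotope {N : ℕ} (Z : Set (EucN N)) : Prop :=
  ∃ (m : ℕ) (a b : Fin m → EucN N), Z = ∑ i : Fin m, segment ℝ (a i) (b i)

/-- A zonoid: a convex body which is the limit, in the Hausdorff metric, of zonotopes. -/
def IsZonoid {N : ℕ} (Y : Set (EucN N)) : Prop :=
  IsConvexBody Y ∧
    ∃ Z : ℕ → Set (EucN N), (∀ k, IsZonotope (Z k)) ∧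
      Tendsto (fun k => hausdorffDist (Z k) Y) atTop (𝓝 0)

namespace ZonoidAux

variable {N : ℕ}

lemma abs_coord_le_norm (x : EucN N) (i : Fin N) : |x i| ≤ ‖x‖ := by
  rw [EuclideanSpace.norm_eq]
  have h1 : ‖x i‖ ^ 2 ≤ ∑ j, ‖x j‖ ^ 2 :=
    Finset.single_le_sum (f := fun j => ‖x j‖ ^ 2) (fun j _ => sq_nonneg _) (Finset.mem_univ i)
  have h2 : |x i| = Real.sqrt (‖x i‖ ^ 2) := by
    rw [Real.sqrt_sq_eq_abs, Real.norm_eq_abs, abs_abs]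
  rw [h2]
  exact Real.sqrt_le_sqrt h1

lemma sum_apply' {ι : Type*} (s : Finset ι) (f : ι → EucN N) (j : Fin N) :
    (∑ i ∈ s, f i) j = ∑ i ∈ s, f i j := by
  induction s using Finset.cons_induction with
  | empty => simp
  | cons i s hi ih => simp [Finset.sum_cons, PiLp.add_apply, ih]

def cube (N : ℕ) (c : ℝ) : Set (EucN N) :=
  ∑ i : Fin N, segment ℝ (-(c • EuclideanSpace.single i (1 : ℝ)))
    (c • EuclideanSpace.single i (1 : ℝ))

lemma mem_seg_iff {c : ℝ} (hc : 0 < c) (v y : EucN N) :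
    y ∈ segment ℝ (-(c • v)) (c • v) ↔ ∃ t : ℝ, |t| ≤ c ∧ y = t • v := by
  rw [segment_eq_image]
  constructor
  · rintro ⟨θ, hθ, rfl⟩
    rw [Set.mem_Icc] at hθ
    refine ⟨(2 * θ - 1) * c, ?_, ?_⟩
    · rw [abs_mul, abs_of_pos hc]
      have h1 : |2 * θ - 1| ≤ 1 := abs_le.mpr ⟨by linarith [hθ.1], by linarith [hθ.2]⟩
      nlinarith
    · show (1 - θ) • -(c • v) + θ • (c • v) = _
      rw [smul_neg, smul_smul, smul_smul, ← neg_smul, ← add_smul]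
      congr 1
      ring
  · rintro ⟨t, ht, rfl⟩
    have h1 : -c ≤ t := (abs_le.mp ht).1
    have h2 : t ≤ c := (abs_le.mp ht).2
    have hc' : c ≠ 0 := hc.ne'
    refine ⟨(t / c + 1) / 2, ?_, ?_⟩
    · rw [Set.mem_Icc]
      have hA : -1 ≤ t / c := by rw [le_div_iff₀ hc]; linarith
      have hB : t / c ≤ 1 := by rw [div_le_one hc]; linarith
      constructor <;> linarith
    · show (1 - (t / c + 1) / 2) • -(c • v) + ((t / c + 1) / 2) • (c • v) = _
      rw [smul_neg, smul_smul, smul_smul, ← neg_smul, ← add_smul]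
      congr 1
      field_simp
      ring

lemma mem_cube_iff {c : ℝ} (hc : 0 < c) (x : EucN N) :
    x ∈ cube N c ↔ ∀ i, |x i| ≤ c := by
  rw [cube, Set.mem_fintype_sum]
  constructor
  · rintro ⟨g, hg, rfl⟩ i
    choose t ht hgt using fun j => (mem_seg_iff hc _ _).1 (hg j)
    rw [sum_apply']
    have hco : ∀ j, g j i = if i = j then t j else 0 := by
      intro j
      rw [hgt j, PiLp.smul_apply, EuclideanSpace.single_apply]
      simp [mul_ite]
    rw [Finset.sum_congr rfl fun j _ => hco j, Finset.sum_ite_eq]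
    simpa using ht i
  · intro h
    refine ⟨fun i => x i • EuclideanSpace.single i (1 : ℝ),
      fun i => (mem_seg_iff hc _ _).2 ⟨x i, h i, rfl⟩, ?_⟩
    ext j
    rw [sum_apply']
    simp [PiLp.smul_apply, EuclideanSpace.single_apply]

lemma cube_zonotope (c : ℝ) : IsZonotope (cube N c) :=
  ⟨N, _, _, rfl⟩

lemma zero_mem_cube {c : ℝ} (hc : 0 < c) : (0 : EucN N) ∈ cube N c :=
  (mem_cube_iff hc _).2 fun i => by simp [hc.le]

lemma norm_le_of_mem_cube {c : ℝ} (hc : 0 < c) {x : EucN N} (hx : x ∈ cube N c) :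
    ‖x‖ ≤ N * c := by
  rw [mem_cube_iff hc] at hx
  have h1 : ‖x‖ ≤ Real.sqrt (N * c ^ 2) := by
    rw [EuclideanSpace.norm_eq]
    apply Real.sqrt_le_sqrt
    calc ∑ j, ‖x j‖ ^ 2 ≤ ∑ _j : Fin N, c ^ 2 := by
          refine Finset.sum_le_sum fun j _ => ?_
          rw [Real.norm_eq_abs]
          exact pow_le_pow_left₀ (abs_nonneg _) (hx j) 2
      _ = N * c ^ 2 := by simp [Finset.sum_const, nsmul_eq_mul]
  have h2 : Real.sqrt (N * c ^ 2) ≤ N * c := by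
    have hN : (N : ℝ) ≤ (N : ℝ) ^ 2 := by
      rcases Nat.eq_zero_or_pos N with h | h
      · simp [h]
      · have : (1 : ℝ) ≤ N := by exact_mod_cast h
        nlinarith
    have : (N : ℝ) * c ^ 2 ≤ (N * c) ^ 2 := by nlinarith [sq_nonneg c]
    calc Real.sqrt (N * c ^ 2) ≤ Real.sqrt ((N * c) ^ 2) := Real.sqrt_le_sqrt this
      _ = |(N : ℝ) * c| := Real.sqrt_sq_eq_abs _
      _ = N * c := abs_of_nonneg (by positivity)
  linarith

lemma isCompact_zonotope {Z : Set (EucN N)} (h : IsZonotope Z) :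
    IsCompact Z ∧ Z.Nonempty := by
  obtain ⟨m, a, b, rfl⟩ := h
  constructor
  · refine Finset.sum_induction _ _ (fun s t hs ht => hs.add ht) (by rw [show (0 : Set (EucN N)) = {0} from rfl]; exact isCompact_singleton) ?_
    intro i _
    rw [segment_eq_image]
    exact isCompact_Icc.image (by fun_prop)
  · refine Finset.sum_induction _ _ (fun s t hs ht => hs.add ht) ⟨0, rfl⟩ ?_
    intro i _
    exact ⟨a i, left_mem_segment ℝ _ _⟩

lemma IsZonotope.add' {Z W : Set (EucN N)} (hZ : IsZonotope Z) (hW : IsZonotope W) :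
    IsZonotope (Z + W) := by
  obtain ⟨m, a, b, rfl⟩ := hZ
  obtain ⟨n, a', b', rfl⟩ := hW
  refine ⟨m + n, Fin.append a a', Fin.append b b', ?_⟩
  rw [Fin.sum_univ_add]
  simp [Fin.append_left, Fin.append_right]

end ZonoidAux

open ZonoidAux in
/-- Every zonoid is the limit in the Hausdorff metric of a decreasing
sequence of zonotopes all containing it. -/
theorem zonoid_decreasing_zonotope_approx {N : ℕ} (Y : Set (EucN N)) (hY : IsZonoid Y) :
    ∃ Z : ℕ → Set (EucN N), (∀ k, IsZonotope (Z k)) ∧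
      (∀ k, Z (k + 1) ⊆ Z k ∧ Y ⊆ Z k) ∧
      Tendsto (fun k => hausdorffDist (Z k) Y) atTop (𝓝 0) := by
  obtain ⟨⟨hYne, hYcomp, -⟩, Z0, hZ0, hconv⟩ := hY
  -- select a subsequence with fast convergence
  have hsel : ∀ k : ℕ, ∃ n, hausdorffDist (Z0 n) Y ≤ (1 / 2 : ℝ) ^ k := by
    intro k
    obtain ⟨m, hm⟩ :=
      (hconv.eventually (gt_mem_nhds (show (0 : ℝ) < (1 / 2) ^ k by positivity))).exists
    exact ⟨m, hm.le⟩
  choose n hn using hsel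
  have hp : ∀ k : ℕ, (0 : ℝ) < (1 / 2 : ℝ) ^ k := fun k => by positivity
  have hc : ∀ k : ℕ, (0 : ℝ) < 4 * (1 / 2 : ℝ) ^ k := fun k => by positivity
  set W : ℕ → Set (EucN N) := fun k => Z0 (n k) + cube N (4 * (1 / 2 : ℝ) ^ k) with hW
  have hZc : ∀ k, IsCompact (Z0 (n k)) ∧ (Z0 (n k)).Nonempty := fun k =>
    isCompact_zonotope (hZ0 (n k))
  have hfin : ∀ k, EMetric.hausdorffEdist (Z0 (n k)) Y ≠ ⊤ := fun k =>
    Metric.hausdorffEdist_ne_top_of_nonempty_of_bounded (hZc k).2 hYne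
      (hZc k).1.isBounded hYcomp.isBounded
  -- from a point of Y to the zonotope
  have key : ∀ k, ∀ x ∈ Y, ∃ z ∈ Z0 (n k), dist x z ≤ (1 / 2 : ℝ) ^ k := by
    intro k x hx
    have h1 : infDist x (Z0 (n k)) ≤ hausdorffDist Y (Z0 (n k)) :=
      infDist_le_hausdorffDist_of_mem hx (by rw [EMetric.hausdorffEdist_comm]; exact hfin k)
    obtain ⟨z, hz, hdz⟩ := (hZc k).1.exists_infDist_eq_dist (hZc k).2 x
    refine ⟨z, hz, ?_⟩
    rw [← hdz]
    calc infDist x (Z0 (n k)) ≤ hausdorffDist Y (Z0 (n k)) := h1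
      _ = hausdorffDist (Z0 (n k)) Y := hausdorffDist_comm
      _ ≤ (1 / 2 : ℝ) ^ k := hn k
  -- from a point of the zonotope to Y
  have key2 : ∀ k, ∀ z ∈ Z0 (n k), ∃ x ∈ Y, dist z x ≤ (1 / 2 : ℝ) ^ k := by
    intro k z hz
    have h1 : infDist z Y ≤ hausdorffDist (Z0 (n k)) Y :=
      infDist_le_hausdorffDist_of_mem hz (hfin k)
    obtain ⟨x, hx, hdx⟩ := hYcomp.exists_infDist_eq_dist hYne z
    exact ⟨x, hx, by rw [← hdx]; exact h1.trans (hn k)⟩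
  have hYW : ∀ k, Y ⊆ W k := by
    intro k x hx
    obtain ⟨z, hz, hdz⟩ := key k x hx
    have hmem : x - z ∈ cube N (4 * (1 / 2 : ℝ) ^ k) := by
      rw [mem_cube_iff (hc k)]
      intro i
      calc |(x - z) i| ≤ ‖x - z‖ := abs_coord_le_norm _ i
        _ = dist x z := (dist_eq_norm x z).symm
        _ ≤ (1 / 2 : ℝ) ^ k := hdz
        _ ≤ 4 * (1 / 2 : ℝ) ^ k := by linarith [hp k]
    have : z + (x - z) ∈ W k := Set.add_mem_add hz hmem
    simpa using this
  refine ⟨W, fun k => IsZonotope.add' (hZ0 (n k)) (cube_zonotope _), fun k => ⟨?_, hYW k⟩, ?_⟩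
  · -- W (k+1) ⊆ W k
    rintro x hx
    rw [hW, Set.mem_add] at hx
    obtain ⟨z', hz', q', hq', rfl⟩ := hx
    obtain ⟨y, hy, hdy⟩ := key2 (k + 1) z' hz'
    obtain ⟨z, hz, hdz⟩ := key k y hy
    have hq'c := (mem_cube_iff (hc (k + 1)) q').1 hq'
    have hmem : (z' - z) + q' ∈ cube N (4 * (1 / 2 : ℝ) ^ k) := by
      rw [mem_cube_iff (hc k)]
      intro i
      have h1 : |(z' - z) i| ≤ ‖z' - z‖ := abs_coord_le_norm _ i
      have h2 : ‖z' - z‖ ≤ (1 / 2 : ℝ) ^ (k + 1) + (1 / 2 : ℝ) ^ k := by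
        calc ‖z' - z‖ = dist z' z := (dist_eq_norm _ _).symm
          _ ≤ dist z' y + dist y z := dist_triangle _ _ _
          _ ≤ (1 / 2 : ℝ) ^ (k + 1) + (1 / 2 : ℝ) ^ k := add_le_add hdy hdz
      have h3 : |((z' - z) + q') i| ≤ |(z' - z) i| + |q' i| := by
        rw [PiLp.add_apply]; exact abs_add_le _ _
      have h4 : (1 / 2 : ℝ) ^ (k + 1) = (1 / 2 : ℝ) ^ k * (1 / 2) := pow_succ _ _
      have h5 := hq'c i
      rw [h4] at h2 h5
      linarith [hp k]
    have : z + ((z' - z) + q') ∈ W k := Set.add_mem_add hz hmem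
    have heq : z + ((z' - z) + q') = z' + q' := by abel
    rwa [heq] at this
  · -- convergence
    have hle : ∀ k, hausdorffDist (W k) Y ≤ (1 + 4 * N) * (1 / 2 : ℝ) ^ k := by
      intro k
      have hr : (0 : ℝ) ≤ (1 + 4 * N) * (1 / 2 : ℝ) ^ k := by positivity
      refine hausdorffDist_le_of_mem_dist hr ?_ ?_
      · rintro x hx
        rw [hW, Set.mem_add] at hx
        obtain ⟨z, hz, q, hq, rfl⟩ := hx
        obtain ⟨y, hy, hdy⟩ := key2 k z hz
        refine ⟨y, hy, ?_⟩
        have hnq : ‖q‖ ≤ N * (4 * (1 / 2 : ℝ) ^ k) := norm_le_of_mem_cube (hc k) hq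
        calc dist (z + q) y ≤ dist (z + q) z + dist z y := dist_triangle _ _ _
          _ = ‖q‖ + dist z y := by rw [dist_eq_norm]; simp
          _ ≤ N * (4 * (1 / 2 : ℝ) ^ k) + (1 / 2 : ℝ) ^ k := add_le_add hnq hdy
          _ = (1 + 4 * N) * (1 / 2 : ℝ) ^ k := by ring
      · intro y hy
        exact ⟨y, hYW k hy, by simpa using hr⟩
    have hlim : Tendsto (fun k : ℕ => (1 + 4 * (N : ℝ)) * (1 / 2 : ℝ) ^ k) atTop (𝓝 0) := by
      have := tendsto_pow_atTop_nhds_zero_of_lt_one (show (0:ℝ) ≤ 1/2 by norm_num)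
        (show (1/2 : ℝ) < 1 by norm_num)
      simpa using this.const_mul (1 + 4 * (N : ℝ))
    exact squeeze_zero (fun k => hausdorffDist_nonneg) hle hlim
end
end

section
/- Let μ : C^N → ℝ be a continuous valuation on the space C^N of quasi-concave functions. If μ(t·I_P) = 0 for every t > 0 and every polytope P ⊂ ℝ^N, then μ(f) = 0 for every f ∈ C^N. -/
open Filter Set MeasureTheory Metric
open scoped Topology Pointwise ENNReal NNReal

noncomputable section

/-- A polytope: the convex hull of finitely many points of `ℝ^N`. -/
def IsPolytope {N : ℕ} (P : Set (EucN N)) : Prop :=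
  ∃ s : Finset (EucN N), s.Nonempty ∧ P = convexHull ℝ (s : Set (EucN N))

namespace VanishAux
variable {N : ℕ}

lemma abs_coord_le_norm (x : EucN N) (i : Fin N) : |x i| ≤ ‖x‖ := by
  rw [EuclideanSpace.norm_eq]
  have h1 : |x i| = Real.sqrt (‖x i‖ ^ 2) := by
    rw [Real.sqrt_sq_eq_abs]; simp
  rw [h1]
  apply Real.sqrt_le_sqrt
  exact Finset.single_le_sum (f := fun j => ‖x j‖ ^ 2) (fun j _ => sq_nonneg _) (Finset.mem_univ i)

lemma norm_le_of_coords {x : EucN N} {r : ℝ} (hr : 0 ≤ r) (h : ∀ i, |x i| ≤ r) :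
    ‖x‖ ≤ Real.sqrt N * r := by
  rw [EuclideanSpace.norm_eq]
  have : ∑ i, ‖x i‖ ^ 2 ≤ (N : ℝ) * r ^ 2 := by
    calc ∑ i, ‖x i‖ ^ 2 ≤ ∑ _i : Fin N, r ^ 2 := by
          apply Finset.sum_le_sum
          intro i _
          have := h i
          have : ‖x i‖ ≤ r := by rwa [Real.norm_eq_abs]
          nlinarith [norm_nonneg (x i)]
      _ = (N : ℝ) * r ^ 2 := by simp [Finset.sum_const, mul_comm]
  calc Real.sqrt (∑ i, ‖x i‖ ^ 2) ≤ Real.sqrt ((N : ℝ) * r ^ 2) := Real.sqrt_le_sqrt this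
    _ = Real.sqrt N * r := by
        rw [Real.sqrt_mul (Nat.cast_nonneg N), Real.sqrt_sq hr]

/-- Vertices of the cube of "radius" r, with hull containing the ball of radius r. -/
lemma cube_hull (r : ℝ) (hr : 0 ≤ r) :
    ∃ V : Finset (EucN N), V.Nonempty ∧
      (∀ v ∈ V, ‖v‖ ≤ Real.sqrt N * r) ∧
      (∀ x : EucN N, ‖x‖ ≤ r → x ∈ convexHull ℝ (V : Set (EucN N))) := by
  classical
  refine ⟨(Fintype.piFinset fun _ : Fin N => ({r, -r} : Finset ℝ) : Finset (Fin N → ℝ)).image (WithLp.toLp 2), ?_, ?_, ?_⟩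
  · rw [Finset.image_nonempty, Fintype.piFinset_nonempty]
    intro a; exact ⟨r, by simp⟩
  · intro v hv
    obtain ⟨w, hw, rfl⟩ := Finset.mem_image.1 hv
    apply norm_le_of_coords hr
    intro i
    simp only [PiLp.toLp_apply]
    have := Fintype.mem_piFinset.1 hw i
    simp only [Finset.mem_insert, Finset.mem_singleton] at this
    rcases this with h | h <;> rw [h] <;> simp [abs_of_nonneg hr, abs_of_nonpos (neg_nonpos.2 hr), hr]
  · intro x hx
    have hcoe : ((Fintype.piFinset fun _ : Fin N => ({r, -r} : Finset ℝ) : Finset (Fin N → ℝ)) :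
        Set (Fin N → ℝ)) = Set.pi Set.univ (fun _ : Fin N => ({r, -r} : Set ℝ)) := by
      rw [Fintype.coe_piFinset]; simp
    have key : WithLp.ofLp x ∈ convexHull ℝ
        (((Fintype.piFinset fun _ : Fin N => ({r, -r} : Finset ℝ)) : Finset (Fin N → ℝ)) :
          Set (Fin N → ℝ)) := by
      rw [hcoe]
      apply mem_convexHull_pi
      intro i _
      have h1 : x i ∈ Icc (-r) r := by
        have := (abs_le.1 ((abs_coord_le_norm x i).trans hx))
        exact ⟨this.1, this.2⟩
      have hseg : convexHull ℝ ({r, -r} : Set ℝ) = Icc (-r) r := by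
        rw [convexHull_pair, segment_eq_Icc' r (-r)]
        rw [min_eq_right (by linarith), max_eq_left (by linarith)]
      rw [hseg]; exact h1
    have h2 : x ∈ ⇑(WithLp.linearEquiv 2 ℝ (Fin N → ℝ)).symm.toLinearMap '' convexHull ℝ
        (((Fintype.piFinset fun _ : Fin N => ({r, -r} : Finset ℝ)) : Finset (Fin N → ℝ)) :
          Set (Fin N → ℝ)) := ⟨_, key, rfl⟩
    rw [LinearMap.image_convexHull] at h2
    rw [Finset.coe_image]
    exact h2


/-- Key approximation: a polytope squeezed between a neighborhood of `K` and a
small thickening of `K`. -/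
lemma polytope_approx {K : Set (EucN N)} (hK : IsCompact K) (hKc : Convex ℝ K)
    (hne : K.Nonempty) {s : ℝ} (hs : 0 < s) :
    ∃ F : Finset (EucN N), F.Nonempty ∧
      (∀ x : EucN N, infDist x K < s / (2 * (Real.sqrt N + 1)) →
        x ∈ convexHull ℝ (F : Set (EucN N))) ∧
      (∀ x ∈ convexHull ℝ (F : Set (EucN N)), infDist x K ≤ s) := by
  classical
  set c : ℝ := Real.sqrt N + 1 with hc
  have hc1 : 1 ≤ c := by
    have := Real.sqrt_nonneg (N : ℝ); linarith
  have hcpos : 0 < c := by linarith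
  set t : ℝ := s / (2 * c) with ht
  have htpos : 0 < t := by positivity
  -- finite t-net of K
  have hcover : K ⊆ ⋃ y ∈ K, ball y t := by
    intro y hy; exact mem_biUnion hy (mem_ball_self htpos)
  obtain ⟨T, hTK, hTfin, hTcov⟩ := hK.elim_finite_subcover_image
    (fun y (_ : y ∈ K) => isOpen_ball) hcover
  have hTne : T.Nonempty := by
    obtain ⟨x, hx⟩ := hne
    obtain ⟨y, hyT, hxy⟩ := mem_iUnion₂.1 (hTcov hx)
    exact ⟨y, hyT⟩
  obtain ⟨V, hVne, hVnorm, hVhull⟩ := cube_hull (N := N) (2 * t) (by positivity)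
  set A : Finset (EucN N) := hTfin.toFinset with hA
  have hAcoe : (A : Set (EucN N)) = T := hTfin.coe_toFinset
  refine ⟨A + V, ?_, ?_, ?_⟩
  · obtain ⟨a, ha⟩ := hTne
    obtain ⟨v, hv⟩ := hVne
    exact ⟨a + v, Finset.add_mem_add (by rwa [← hAcoe] at ha) hv⟩
  · intro x hx
    obtain ⟨k, hkK, hdk⟩ := hK.exists_infDist_eq_dist hne x
    obtain ⟨n, hnT, hkn⟩ := mem_iUnion₂.1 (hTcov hkK)
    have hxk : dist x k < t := by rw [← hdk]; exact hx
    have hkn' : dist k n < t := mem_ball.1 hkn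
    have hxn : ‖x - n‖ ≤ 2 * t := by
      rw [← dist_eq_norm]
      calc dist x n ≤ dist x k + dist k n := dist_triangle x k n
        _ ≤ 2 * t := by linarith
    have hxmem : x = n + (x - n) := by abel
    rw [Finset.coe_add, convexHull_add]
    rw [hxmem]
    exact Set.add_mem_add (subset_convexHull ℝ _ (by rw [hAcoe]; exact hnT)) (hVhull _ hxn)
  · intro x hx
    rw [Finset.coe_add, convexHull_add] at hx
    obtain ⟨a, ha, v, hv, rfl⟩ := hx
    have haK : a ∈ K := convexHull_min (by rw [hAcoe]; exact hTK) hKc ha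
    have hvnorm : ‖v‖ ≤ Real.sqrt N * (2 * t) := by
      have hsub : convexHull ℝ (V : Set (EucN N)) ⊆ closedBall 0 (Real.sqrt N * (2 * t)) := by
        apply convexHull_min _ (convex_closedBall _ _)
        intro w hw
        rw [mem_closedBall_zero_iff]
        exact hVnorm w hw
      have := hsub hv
      rwa [mem_closedBall_zero_iff] at this
    have hd : dist (a + v) a = ‖v‖ := by
      rw [dist_eq_norm]; congr 1; abel
    calc infDist (a + v) K ≤ dist (a + v) a := infDist_le_dist_of_mem haK
      _ = ‖v‖ := hd
      _ ≤ Real.sqrt N * (2 * t) := hvnorm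
      _ ≤ c * (2 * t) := by
          have hsn : Real.sqrt N ≤ c := by rw [hc]; linarith
          exact mul_le_mul_of_nonneg_right hsn (by positivity)
      _ = s := by
          rw [ht]
          field_simp


lemma qc_zero : QuasiConcave (0 : EucN N → ℝ) := by
  refine ⟨fun x => le_refl 0, fun t ht => Or.inl ?_⟩
  ext x
  simp only [Set.mem_setOf_eq, Pi.zero_apply, Set.mem_empty_iff_false, iff_false, not_le]
  exact ht

lemma indicator_level_of_le {K : Set (EucN N)} {t s : ℝ} (hs : 0 < s) (hst : s ≤ t) :
    {x | s ≤ Set.indicator K (fun _ => t) x} = K := by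
  ext x
  by_cases hx : x ∈ K
  · simp [Set.indicator_of_mem hx, hx, hst]
  · simp [Set.indicator_of_notMem hx, hx, not_le.2 hs]

lemma indicator_level_of_gt {K : Set (EucN N)} {t s : ℝ} (ht : 0 ≤ t) (hst : t < s) :
    {x | s ≤ Set.indicator K (fun _ => t) x} = ∅ := by
  ext x
  by_cases hx : x ∈ K
  · simp [Set.indicator_of_mem hx, not_le.2 hst]
  · simp [Set.indicator_of_notMem hx, not_le.2 (lt_of_le_of_lt ht hst)]

lemma qc_indicator {K : Set (EucN N)} (hK : IsCompact K) (hKc : Convex ℝ K) {t : ℝ}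
    (ht : 0 ≤ t) : QuasiConcave (Set.indicator K fun _ => t) := by
  refine ⟨fun x => Set.indicator_nonneg (fun _ _ => ht) x, fun s hs => ?_⟩
  by_cases hst : s ≤ t
  · rw [indicator_level_of_le hs hst]
    rcases K.eq_empty_or_nonempty with h | h
    · exact Or.inl h
    · exact Or.inr ⟨hK, hKc⟩
  · rw [indicator_level_of_gt ht (not_le.1 hst)]
    exact Or.inl rfl

lemma qc_hull_finset (F : Finset (EucN N)) {t : ℝ} (ht : 0 ≤ t) :
    QuasiConcave (Set.indicator (convexHull ℝ (F : Set (EucN N))) fun _ => t) :=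
  qc_indicator (F.finite_toSet.isCompact_convexHull ℝ) (convex_convexHull ℝ _) ht

/-- The valuation vanishes on `t · I_K` for every convex body `K` and `t > 0`. -/
lemma mu_indicator_body (μ : (EucN N → ℝ) → ℝ) (hval : IsValuationQC μ)
    (hcont : ContinuousVal μ)
    (hP : ∀ t : ℝ, 0 < t → ∀ P : Set (EucN N), IsPolytope P →
      μ (Set.indicator P fun _ => t) = 0)
    {K : Set (EucN N)} (hK : IsCompact K) (hKc : Convex ℝ K) {t : ℝ} (ht : 0 < t) :
    μ (Set.indicator K fun _ => t) = 0 := by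
  classical
  rcases K.eq_empty_or_nonempty with rfl | hne
  · rw [show (Set.indicator (∅ : Set (EucN N)) fun _ => t) = 0 from Set.indicator_empty _]
    exact hval.1
  set c : ℝ := Real.sqrt N + 1 with hc
  have hc1 : 1 ≤ c := by
    have := Real.sqrt_nonneg (N : ℝ); linarith
  have hcpos : 0 < c := by linarith
  set q : ℝ := (4 * c)⁻¹ with hq
  have hqpos : 0 < q := by positivity
  have hqhalf : q ≤ 1 / 2 := by
    rw [hq]
    rw [inv_le_comm₀ (by positivity) (by norm_num)]
    · linarith
  set s : ℕ → ℝ := fun n => q ^ n with hsdef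
  have hspos : ∀ n, 0 < s n := fun n => pow_pos hqpos n
  have hsucc : ∀ n, s (n + 1) < s n / (2 * c) := by
    intro n
    have : s (n + 1) = s n * q := by rw [hsdef]; ring
    rw [this, hq, div_eq_mul_inv]
    have h1 : (4 * c)⁻¹ < (2 * c)⁻¹ := by
      apply inv_strictAnti₀ (by positivity)
      linarith
    exact mul_lt_mul_of_pos_left h1 (hspos n)
  -- choose polytopes
  have hex : ∀ n : ℕ, ∃ F : Finset (EucN N), F.Nonempty ∧
      (∀ x : EucN N, infDist x K < s n / (2 * c) →
        x ∈ convexHull ℝ (F : Set (EucN N))) ∧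
      (∀ x ∈ convexHull ℝ (F : Set (EucN N)), infDist x K ≤ s n) := by
    intro n
    exact polytope_approx hK hKc hne (hspos n)
  choose P hPne hPin hPout using hex
  set G : ℕ → Set (EucN N) := fun n => convexHull ℝ ((P n : Set (EucN N))) with hG
  have hnested : ∀ n, G (n + 1) ⊆ G n := by
    intro n x hx
    exact hPin n x (lt_of_le_of_lt (hPout (n + 1) x hx) (hsucc n))
  have hKsub : ∀ n, K ⊆ G n := by
    intro n x hx
    apply hPin n x
    rw [infDist_zero_of_mem hx]
    positivity
  set F : ℕ → EucN N → ℝ := fun n => Set.indicator (G n) fun _ => t with hF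
  have hqc : ∀ n, QuasiConcave (F n) := fun n => qc_hull_finset (P n) ht.le
  have hanti : ∀ x, Antitone fun n => F n x := by
    intro x
    apply antitone_nat_of_succ_le
    intro n
    by_cases hx : x ∈ G (n + 1)
    · have hx' : x ∈ G n := hnested n hx
      simp [hF, Set.indicator_of_mem hx, Set.indicator_of_mem hx']
    · simp only [hF, Set.indicator_of_notMem hx]
      exact Set.indicator_nonneg (fun _ _ => ht.le) x
  have htend : ∀ x, Tendsto (fun n => F n x) atTop (𝓝 (Set.indicator K (fun _ => t) x)) := by
    intro x
    by_cases hx : x ∈ K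
    · have : ∀ n, F n x = t := fun n => Set.indicator_of_mem (hKsub n hx) _
      simp only [this, Set.indicator_of_mem hx]
      exact tendsto_const_nhds
    · have hd : 0 < infDist x K := (hK.isClosed.notMem_iff_infDist_pos hne).1 hx
      obtain ⟨n₀, hn₀⟩ : ∃ n₀ : ℕ, (1 / 2 : ℝ) ^ n₀ < infDist x K :=
        exists_pow_lt_of_lt_one hd (by norm_num)
      rw [Set.indicator_of_notMem hx]
      apply tendsto_atTop_of_eventually_const (i₀ := n₀)
      intro n hn
      have hsn : s n < infDist x K := by
        calc s n = q ^ n := rfl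
          _ ≤ (1 / 2 : ℝ) ^ n := pow_le_pow_left₀ hqpos.le hqhalf n
          _ ≤ (1 / 2 : ℝ) ^ n₀ := pow_le_pow_of_le_one (by norm_num) (by norm_num) hn
          _ < infDist x K := hn₀
      have hxG : x ∉ G n := by
        intro hmem
        exact absurd (hPout n x hmem) (not_le.2 hsn)
      exact Set.indicator_of_notMem hxG _
  have hlim := hcont F (Set.indicator K fun _ => t) hqc (qc_indicator hK hKc ht.le)
    (Or.inr hanti) htend
  have hzero : ∀ n, μ (F n) = 0 := by
    intro n
    exact hP t ht (G n) ⟨P n, hPne n, rfl⟩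
  rw [show (fun n => μ (F n)) = fun _ => (0 : ℝ) from funext hzero] at hlim
  exact (tendsto_nhds_unique tendsto_const_nhds hlim).symm


lemma mu_indicator_body' (μ : (EucN N → ℝ) → ℝ) (hval : IsValuationQC μ)
    (hcont : ContinuousVal μ)
    (hP : ∀ t : ℝ, 0 < t → ∀ P : Set (EucN N), IsPolytope P →
      μ (Set.indicator P fun _ => t) = 0)
    {K : Set (EucN N)} (hK : IsCompact K) (hKc : Convex ℝ K) {t : ℝ} (ht : 0 ≤ t) :
    μ (Set.indicator K fun _ => t) = 0 := by
  rcases ht.lt_or_eq with h | h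
  · exact mu_indicator_body μ hval hcont hP hK hKc h
  · rw [← h]
    rw [show (Set.indicator K fun _ => (0:ℝ)) = 0 by funext x; simp]
    exact hval.1

/-- The valuation vanishes on simple quasi-concave functions with values in `{0, c, …, m·c}`. -/
lemma mu_simple (μ : (EucN N → ℝ) → ℝ) (hval : IsValuationQC μ)
    (hcont : ContinuousVal μ)
    (hP : ∀ t : ℝ, 0 < t → ∀ P : Set (EucN N), IsPolytope P →
      μ (Set.indicator P fun _ => t) = 0)
    {c : ℝ} (hc : 0 < c) :
    ∀ m : ℕ, ∀ g : EucN N → ℝ, QuasiConcave g →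
      (∀ x, ∃ j : ℕ, j ≤ m ∧ g x = j * c) → μ g = 0 := by
  intro m
  induction m with
  | zero =>
    intro g hg hval0
    have : g = 0 := by
      funext x
      obtain ⟨j, hj, hx⟩ := hval0 x
      interval_cases j
      simpa using hx
    rw [this]; exact hval.1
  | succ m ih =>
    intro g hg hvals
    set K : Set (EucN N) := {x | ((m : ℝ) + 1) * c ≤ g x} with hKdef
    rcases K.eq_empty_or_nonempty with hKe | hKne
    · -- no point attains the top value
      apply ih g hg
      intro x
      obtain ⟨j, hj, hx⟩ := hvals x
      refine ⟨j, ?_, hx⟩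
      by_contra hjm
      have hj1 : j = m + 1 := by omega
      have hmem : x ∈ K := by
        rw [hKdef]
        simp only [Set.mem_setOf_eq, hx, hj1]
        push_cast
        exact le_refl _
      rw [hKe] at hmem
      simpa using hmem
    · have hcomp : IsCompact K ∧ Convex ℝ K := by
        have h := hg.2 (((m : ℝ) + 1) * c) (by positivity)
        rcases h with h | h
        · exact absurd h (by rw [← hKdef]; exact hKne.ne_empty)
        · rwa [← hKdef] at h
      -- on K, g equals (m+1)c ; off K, g ≤ mc
      have hgK : ∀ x ∈ K, g x = ((m : ℝ) + 1) * c := by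
        intro x hx
        obtain ⟨j, hj, hjx⟩ := hvals x
        have hge : ((m : ℝ) + 1) * c ≤ g x := hx
        rw [hjx] at hge ⊢
        have : (m : ℝ) + 1 ≤ j := le_of_mul_le_mul_right (by linarith [hge]) hc
        have : j = m + 1 := by
          have hj' : (j : ℝ) ≤ (m : ℝ) + 1 := by exact_mod_cast hj
          have : (j : ℝ) = (m : ℝ) + 1 := le_antisymm hj' this
          exact_mod_cast this
        rw [this]; push_cast; ring
      have hgnotK : ∀ x ∉ K, g x ≤ (m : ℝ) * c := by
        intro x hx
        obtain ⟨j, hj, hjx⟩ := hvals x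
        have hlt : g x < ((m : ℝ) + 1) * c := not_le.1 hx
        rw [hjx] at hlt ⊢
        have : (j : ℝ) < (m : ℝ) + 1 := lt_of_mul_lt_mul_right (by linarith) hc.le
        have hjm : j ≤ m := by exact_mod_cast Nat.lt_succ_iff.1 (by exact_mod_cast this)
        have : (j : ℝ) ≤ m := by exact_mod_cast hjm
        nlinarith
      set g' : EucN N → ℝ := fun x => min (g x) ((m : ℝ) * c) with hg'def
      have hg'qc : QuasiConcave g' := by
        constructor
        · intro x
          exact le_min (hg.1 x) (by positivity)
        · intro t htpos
          by_cases htm : t ≤ (m : ℝ) * c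
          · have : {x | t ≤ g' x} = {x | t ≤ g x} := by
              ext x
              simp only [Set.mem_setOf_eq, hg'def, le_min_iff]
              exact ⟨fun h => h.1, fun h => ⟨h, htm⟩⟩
            rw [this]
            exact hg.2 t htpos
          · left
            ext x
            simp only [Set.mem_setOf_eq, hg'def, le_min_iff, Set.mem_empty_iff_false, iff_false,
              not_and, not_le]
            intro _
            exact not_le.1 htm
      have hg'vals : ∀ x, ∃ j : ℕ, j ≤ m ∧ g' x = j * c := by
        intro x
        by_cases hx : x ∈ K
        · refine ⟨m, le_refl m, ?_⟩
          rw [hg'def]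
          simp only
          rw [hgK x hx, min_eq_right (by nlinarith)]
        · obtain ⟨j, hj, hjx⟩ := hvals x
          have hlt : g x < ((m : ℝ) + 1) * c := not_le.1 hx
          have hle : g x ≤ (m : ℝ) * c := hgnotK x hx
          refine ⟨j, ?_, ?_⟩
          · rw [hjx] at hlt
            have : (j : ℝ) < (m : ℝ) + 1 := lt_of_mul_lt_mul_right (by linarith) hc.le
            exact_mod_cast Nat.lt_succ_iff.1 (by exact_mod_cast this)
          · rw [hg'def]
            simp only
            rw [min_eq_left hle, hjx]
      set h : EucN N → ℝ := Set.indicator K fun _ => ((m : ℝ) + 1) * c with hhdef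
      have hhqc : QuasiConcave h := qc_indicator hcomp.1 hcomp.2 (by positivity)
      have hsup : g' ⊔ h = g := by
        funext x
        by_cases hx : x ∈ K
        · simp only [Pi.sup_apply, hhdef, Set.indicator_of_mem hx, hg'def]
          rw [hgK x hx, min_eq_right (by nlinarith)]
          rw [max_eq_right (by nlinarith)]
        · simp only [Pi.sup_apply, hhdef, Set.indicator_of_notMem hx, hg'def]
          rw [min_eq_left (hgnotK x hx)]
          exact max_eq_left (hg.1 x)
      have hinf : g' ⊓ h = Set.indicator K fun _ => (m : ℝ) * c := by
        funext x
        by_cases hx : x ∈ K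
        · simp only [Pi.inf_apply, hhdef, Set.indicator_of_mem hx, hg'def]
          rw [hgK x hx,
            min_eq_right (show (m:ℝ)*c ≤ ((m:ℝ)+1)*c by nlinarith),
            min_eq_left (show (m:ℝ)*c ≤ ((m:ℝ)+1)*c by nlinarith)]
        · simp only [Pi.inf_apply, hhdef, Set.indicator_of_notMem hx,
            Set.indicator_of_notMem hx, hg'def]
          rw [min_eq_left (hgnotK x hx)]
          exact min_eq_right (hg.1 x)
      have hval2 := hval.2 g' h hg'qc hhqc (by rw [hsup]; exact hg)
      rw [hsup, hinf] at hval2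
      have h1 : μ (Set.indicator K fun _ => ((m : ℝ) + 1) * c) = 0 :=
        mu_indicator_body' μ hval hcont hP hcomp.1 hcomp.2 (by positivity)
      have h2 : μ (Set.indicator K fun _ => (m : ℝ) * c) = 0 :=
        mu_indicator_body' μ hval hcont hP hcomp.1 hcomp.2 (by positivity)
      have hmg : μ g = μ g' := by linarith
      rw [hmg]
      exact ih g' hg'qc hg'vals

lemma qc_bddAbove {f : EucN N → ℝ} (hf : QuasiConcave f) : ∃ M : ℕ, ∀ x, f x ≤ M := by
  by_contra hcon
  push_neg at hcon
  set S : ℕ → Set (EucN N) := fun n => {x | ((n : ℝ) + 1) ≤ f x} with hS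
  have hSne : ∀ n, (S n).Nonempty := by
    intro n
    obtain ⟨x, hx⟩ := hcon (n + 1)
    exact ⟨x, by simp only [hS, Set.mem_setOf_eq]; push_cast at hx; linarith⟩
  have hScc : ∀ n, IsCompact (S n) ∧ Convex ℝ (S n) := by
    intro n
    rcases hf.2 ((n : ℝ) + 1) (by positivity) with h | h
    · exact absurd h (hSne n).ne_empty
    · exact h
  have hmono : ∀ n, S (n + 1) ⊆ S n := by
    intro n x hx
    simp only [hS, Set.mem_setOf_eq] at hx ⊢
    push_cast at hx ⊢
    linarith
  obtain ⟨x, hx⟩ := IsCompact.nonempty_iInter_of_sequence_nonempty_isCompact_isClosed S hmono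
    hSne (hScc 0).1 (fun n => (hScc n).1.isClosed)
  obtain ⟨n, hn⟩ := exists_nat_gt (f x)
  have := Set.mem_iInter.1 hx n
  simp only [hS, Set.mem_setOf_eq] at this
  linarith

end VanishAux

theorem VanishAux.main {N : ℕ} (μ : (EucN N → ℝ) → ℝ)
    (hval : IsValuationQC μ) (hcont : ContinuousVal μ)
    (hP : ∀ t : ℝ, 0 < t → ∀ P : Set (EucN N), IsPolytope P →
      μ (Set.indicator P fun _ => t) = 0) :
    ∀ f : EucN N → ℝ, QuasiConcave f → μ f = 0 := by
  intro f hf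
  obtain ⟨M, hM⟩ := VanishAux.qc_bddAbove hf
  have hpow : ∀ n : ℕ, (0:ℝ) < 2 ^ n := fun n => by positivity
  set g : ℕ → EucN N → ℝ := fun n x => (⌊f x * 2 ^ n⌋ : ℝ) / 2 ^ n with hgdef
  have hgnonneg : ∀ n x, 0 ≤ g n x := by
    intro n x
    apply div_nonneg _ (hpow n).le
    exact_mod_cast Int.floor_nonneg.2 (mul_nonneg (hf.1 x) (hpow n).le)
  have hlevel : ∀ (n : ℕ) (t : ℝ), 0 < t →
      {x | t ≤ g n x} = {x | (⌈t * 2 ^ n⌉ : ℝ) / 2 ^ n ≤ f x} := by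
    intro n t ht
    ext x
    simp only [Set.mem_setOf_eq, hgdef]
    rw [le_div_iff₀ (hpow n), div_le_iff₀ (hpow n)]
    constructor
    · intro h
      have h1 : (⌈t * 2 ^ n⌉ : ℤ) ≤ ⌊f x * 2 ^ n⌋ := by
        apply Int.ceil_le.2
        exact_mod_cast h
      calc ((⌈t * 2 ^ n⌉ : ℤ) : ℝ) ≤ (⌊f x * 2 ^ n⌋ : ℝ) := by exact_mod_cast h1
        _ ≤ f x * 2 ^ n := Int.floor_le _
    · intro h
      have h1 : (⌈t * 2 ^ n⌉ : ℤ) ≤ ⌊f x * 2 ^ n⌋ := Int.le_floor.2 h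
      calc t * 2 ^ n ≤ ((⌈t * 2 ^ n⌉ : ℤ) : ℝ) := Int.le_ceil _
        _ ≤ (⌊f x * 2 ^ n⌋ : ℝ) := by exact_mod_cast h1
  have hqc : ∀ n, QuasiConcave (g n) := by
    intro n
    refine ⟨hgnonneg n, fun t ht => ?_⟩
    rw [hlevel n t ht]
    have hceil : (0 : ℝ) < (⌈t * 2 ^ n⌉ : ℝ) / 2 ^ n := by
      apply div_pos _ (hpow n)
      exact_mod_cast Int.ceil_pos.2 (by positivity)
    exact hf.2 _ hceil
  have hmono : ∀ x, Monotone fun n => g n x := by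
    intro x
    apply monotone_nat_of_le_succ
    intro n
    simp only [hgdef]
    have key : (⌊f x * 2 ^ n⌋ * 2 : ℤ) ≤ ⌊f x * 2 ^ (n + 1)⌋ := by
      apply Int.le_floor.2
      push_cast
      have := Int.floor_le (f x * 2 ^ n)
      have hp : (2:ℝ) ^ (n+1) = 2 ^ n * 2 := by ring
      rw [hp]
      nlinarith
    rw [div_le_div_iff₀ (hpow n) (hpow (n + 1))]
    have key' : ((⌊f x * 2 ^ n⌋ : ℝ)) * 2 ≤ (⌊f x * 2 ^ (n + 1)⌋ : ℝ) := by exact_mod_cast key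
    have hp : (2:ℝ) ^ (n+1) = 2 ^ n * 2 := by ring
    rw [hp] at key' ⊢
    nlinarith [hpow n]
  have htend : ∀ x, Tendsto (fun n => g n x) atTop (𝓝 (f x)) := by
    intro x
    have hup : ∀ n, g n x ≤ f x := by
      intro n
      simp only [hgdef]
      rw [div_le_iff₀ (hpow n)]
      exact Int.floor_le _
    have hlow : ∀ n, f x - (1/2 : ℝ) ^ n ≤ g n x := by
      intro n
      simp only [hgdef]
      rw [le_div_iff₀ (hpow n)]
      have h1 : f x * 2 ^ n - 1 < (⌊f x * 2 ^ n⌋ : ℝ) := Int.sub_one_lt_floor _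
      have h2 : (1/2 : ℝ) ^ n * 2 ^ n = 1 := by
        rw [← mul_pow]; norm_num
      nlinarith
    have hlo : Tendsto (fun n => f x - (1/2 : ℝ) ^ n) atTop (𝓝 (f x)) := by
      have : Tendsto (fun n : ℕ => (1/2 : ℝ) ^ n) atTop (𝓝 0) :=
        tendsto_pow_atTop_nhds_zero_of_lt_one (by norm_num) (by norm_num)
      simpa using tendsto_const_nhds.sub this
    exact tendsto_of_tendsto_of_tendsto_of_le_of_le hlo tendsto_const_nhds hlow hup
  have hzero : ∀ n, μ (g n) = 0 := by
    intro n
    apply VanishAux.mu_simple μ hval hcont hP (c := ((2:ℝ) ^ n)⁻¹) (by positivity) (M * 2 ^ n)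
      (g n) (hqc n)
    intro x
    refine ⟨⌊f x * 2 ^ n⌋.toNat, ?_, ?_⟩
    · rw [Int.toNat_le]
      have h1 : f x * 2 ^ n ≤ (M : ℝ) * 2 ^ n :=
        mul_le_mul_of_nonneg_right (hM x) (hpow n).le
      have h2 : ⌊f x * 2 ^ n⌋ ≤ ⌊((M : ℝ) * 2 ^ n)⌋ := Int.floor_le_floor h1
      have h3 : ⌊((M : ℝ) * 2 ^ n)⌋ = (M * 2 ^ n : ℕ) := by
        rw [show ((M : ℝ) * 2 ^ n) = ((M * 2 ^ n : ℕ) : ℝ) by push_cast; ring]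
        exact Int.floor_natCast _
      omega
    · have hnn : (0 : ℤ) ≤ ⌊f x * 2 ^ n⌋ := Int.floor_nonneg.2 (mul_nonneg (hf.1 x) (hpow n).le)
      simp only [hgdef]
      rw [div_eq_mul_inv]
      congr 1
      exact_mod_cast (Int.toNat_of_nonneg hnn).symm
  have hlim := hcont g f hqc hf (Or.inl hmono) htend
  rw [show (fun n => μ (g n)) = fun _ => (0 : ℝ) from funext hzero] at hlim
  exact (tendsto_nhds_unique tendsto_const_nhds hlim).symm

/-- Proposition 4.4. A continuous valuation on `C^N` vanishing on all
functions `t·I_P`, `t > 0`, `P` a polytope, vanishes identically on `C^N`. -/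
theorem vanishing_on_polytope_indicators {N : ℕ} (μ : (EucN N → ℝ) → ℝ)
    (hval : IsValuationQC μ) (hcont : ContinuousVal μ)
    (hP : ∀ t : ℝ, 0 < t → ∀ P : Set (EucN N), IsPolytope P →
      μ (Set.indicator P fun _ => t) = 0) :
    ∀ f : EucN N → ℝ, QuasiConcave f → μ f = 0 :=
  VanishAux.main μ hval hcont hP
end
end

section
/- Let μ : C^N → ℝ be a continuous, translation invariant and 0-homogeneous valuation on the space C^N of quasi-concave functions. Then there exists a continuous function φ : [0,∞) → ℝ with φ(0) = 0 such that μ(f) = φ(max_{ℝ^N} f) for every f ∈ C^N. -/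
open Filter Set MeasureTheory Metric
open scoped Topology Pointwise ENNReal NNReal

noncomputable section

namespace ZeroHomAux
open scoped Classical

/-- Every real sequence has a monotone or antitone subsequence. -/
lemma exists_mono_subseq (u : ℕ → ℝ) :
    ∃ g : ℕ → ℕ, StrictMono g ∧ (Monotone (u ∘ g) ∨ Antitone (u ∘ g)) := by
  by_cases hA : ∀ N : ℕ, ∃ n, N ≤ n ∧ ∀ m, n < m → u m ≤ u n
  · choose p hp₁ hp₂ using hA
    set g : ℕ → ℕ := fun k => Nat.rec (p 0) (fun _ prev => p (prev + 1)) k with hg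
    have hgsucc : ∀ k, g (k + 1) = p (g k + 1) := fun k => rfl
    have hpeak : ∀ k, ∀ m, g k < m → u m ≤ u (g k) := by
      intro k
      cases k with
      | zero => exact hp₂ 0
      | succ k' => rw [hgsucc]; exact hp₂ (g k' + 1)
    have hlt : ∀ k, g k < g (k + 1) := by
      intro k
      rw [hgsucc]
      exact lt_of_lt_of_le (Nat.lt_succ_self _) (hp₁ (g k + 1))
    refine ⟨g, strictMono_nat_of_lt_succ hlt, Or.inr (antitone_nat_of_succ_le fun k => ?_)⟩
    exact hpeak k (g (k + 1)) (hlt k)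
  · push_neg at hA
    obtain ⟨M, hM⟩ := hA
    have hM' : ∀ n, M ≤ n → ∃ m, n < m ∧ u n < u m := by
      intro n hn
      obtain ⟨m, hm1, hm2⟩ := hM n hn
      exact ⟨m, hm1, hm2⟩
    choose! q hq₁ hq₂ using hM'
    set g : ℕ → ℕ := fun k => Nat.rec M (fun _ prev => q prev) k with hg
    have hgsucc : ∀ k, g (k + 1) = q (g k) := fun k => rfl
    have hinv : ∀ k, M ≤ g k := by
      intro k
      induction k with
      | zero => exact le_refl M
      | succ k' ih =>
        rw [hgsucc]
        exact le_trans ih (le_of_lt (hq₁ (g k') ih))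
    have hlt : ∀ k, g k < g (k + 1) := fun k => by
      rw [hgsucc]; exact hq₁ (g k) (hinv k)
    refine ⟨g, strictMono_nat_of_lt_succ hlt, Or.inl (monotone_nat_of_le_succ fun k => ?_)⟩
    have := hq₂ (g k) (hinv k)
    rw [Function.comp_apply, Function.comp_apply, hgsucc]
    exact this.le

variable {N : ℕ}

/-- The function equal to `M` at the origin and `0` elsewhere. -/
def dirac (N : ℕ) (M : ℝ) : EucN N → ℝ := fun x => if x = 0 then M else 0

lemma dirac_apply_zero (M : ℝ) : dirac N M 0 = M := by
  unfold dirac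
  exact if_pos rfl

lemma dirac_apply_ne (M : ℝ) {x : EucN N} (hx : x ≠ 0) : dirac N M x = 0 := by
  unfold dirac
  exact if_neg hx

lemma dirac_qc {M : ℝ} (hM : 0 ≤ M) : QuasiConcave (dirac N M) := by
  refine ⟨fun x => ?_, fun t ht => ?_⟩
  · unfold dirac
    split
    · exact hM
    · exact le_refl 0
  · by_cases hMt : t ≤ M
    · right
      have hset : {x : EucN N | t ≤ dirac N M x} = {0} := by
        ext x
        simp only [dirac, mem_setOf_eq, mem_singleton_iff]
        rcases eq_or_ne x 0 with h | h
        · simp [h, hMt]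
        · simp only [if_neg h]
          constructor
          · intro hx; linarith
          · intro hx; exact absurd hx h
      rw [hset]
      exact ⟨isCompact_singleton, convex_singleton 0⟩
    · left
      ext x
      simp only [dirac, mem_setOf_eq, mem_empty_iff_false, iff_false, not_le]
      split
      · exact lt_of_not_ge hMt
      · exact ht

lemma qc_translate {f : EucN N → ℝ} (hf : QuasiConcave f) (v : EucN N) :
    QuasiConcave (fun x => f (x + v)) := by
  refine ⟨fun x => hf.1 _, fun t ht => ?_⟩
  have hpre : {x : EucN N | t ≤ f (x + v)} = (fun x : EucN N => x + v) ⁻¹' {y | t ≤ f y} := rfl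
  rcases hf.2 t ht with h | ⟨hc, hconv⟩
  · left
    rw [hpre, h, Set.preimage_empty]
  · right
    rw [hpre]
    constructor
    · exact (Homeomorph.addRight v).isCompact_preimage.mpr hc
    · exact hconv.translate_preimage_left v

lemma qc_scale {f : EucN N → ℝ} (hf : QuasiConcave f) {c : ℝ} (hc : 0 < c) :
    QuasiConcave (fun x => f (c • x)) := by
  refine ⟨fun x => hf.1 _, fun t ht => ?_⟩
  have hpre : {x : EucN N | t ≤ f (c • x)} = (fun x : EucN N => c • x) ⁻¹' {y | t ≤ f y} := rfl
  rcases hf.2 t ht with h | ⟨hcpt, hconv⟩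
  · left
    rw [hpre, h, Set.preimage_empty]
  · right
    rw [hpre]
    constructor
    · exact (Homeomorph.smulOfNeZero c hc.ne').isCompact_preimage.mpr hcpt
    · intro x hx y hy a b ha hb hab
      have h1 : c • x ∈ {y | t ≤ f y} := hx
      have h2 : c • y ∈ {y | t ≤ f y} := hy
      have hmem := hconv h1 h2 ha hb hab
      have heq : c • (a • x + b • y) = a • (c • x) + b • (c • y) := by
        rw [smul_add, smul_comm c a, smul_comm c b]
      simp only [Set.mem_preimage]
      rw [heq]
      exact hmem

lemma qc_exists_max {f : EucN N → ℝ} (hf : QuasiConcave f) : ∃ x₀, ∀ x, f x ≤ f x₀ := by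
  by_cases h0 : ∀ x, f x ≤ 0
  · exact ⟨0, fun x => (h0 x).trans (hf.1 0)⟩
  push_neg at h0
  obtain ⟨x₁, hx₁⟩ := h0
  -- `f` is bounded above
  have hbdd : ∃ B : ℝ, ∀ x, f x < B := by
    by_contra hb
    push_neg at hb
    set K : ℕ → Set (EucN N) := fun n => {x | (n + 1 : ℝ) ≤ f x} with hK
    have hKne : ∀ n, (K n).Nonempty := by
      intro n
      obtain ⟨x, hx⟩ := hb ((n : ℝ) + 1)
      exact ⟨x, hx⟩
    have hKcc : ∀ n, IsCompact (K n) ∧ Convex ℝ (K n) := by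
      intro n
      rcases hf.2 ((n : ℝ) + 1) (by positivity) with h | h
      · exact absurd (hKne n) (by rw [hK]; simp only [h]; exact Set.not_nonempty_empty)
      · exact h
    have hsub : ∀ n, K (n + 1) ⊆ K n := by
      intro n x hx
      have : ((n : ℝ) + 1 + 1) ≤ f x := by
        have := hx
        simp only [hK, mem_setOf_eq] at this ⊢
        push_cast at this
        linarith
      exact le_trans (by linarith) this
    obtain ⟨x, hx⟩ := IsCompact.nonempty_iInter_of_sequence_nonempty_isCompact_isClosed K hsub
      hKne (hKcc 0).1 (fun n => (hKcc n).1.isClosed)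
    obtain ⟨n, hn⟩ := exists_nat_gt (f x)
    have hxn : x ∈ K n := Set.mem_iInter.mp hx n
    have : (n : ℝ) + 1 ≤ f x := hxn
    linarith
  obtain ⟨B, hB⟩ := hbdd
  have hne : (Set.range f).Nonempty := ⟨f x₁, Set.mem_range_self x₁⟩
  have hbdda : BddAbove (Set.range f) := ⟨B, by rintro _ ⟨x, rfl⟩; exact (hB x).le⟩
  set M := sSup (Set.range f) with hMdef
  have hfleM : ∀ x, f x ≤ M := fun x => le_csSup hbdda (Set.mem_range_self x)
  by_cases hMeq : M ≤ f x₁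
  · exact ⟨x₁, fun x => le_trans (hfleM x) hMeq⟩
  push_neg at hMeq
  set t : ℕ → ℝ := fun k => M - (M - f x₁) / (k + 1) with htdef
  have htx₁ : ∀ k, f x₁ ≤ t k := by
    intro k
    have h1 : (M - f x₁) / (k + 1) ≤ M - f x₁ := by
      apply div_le_self (by linarith)
      have : (0 : ℝ) ≤ (k : ℝ) := Nat.cast_nonneg k
      linarith
    simp only [htdef]
    linarith
  have htpos : ∀ k, 0 < t k := fun k => lt_of_lt_of_le hx₁ (htx₁ k)
  have htltM : ∀ k, t k < M := by
    intro k
    have : 0 < (M - f x₁) / (k + 1) := div_pos (by linarith) (by positivity)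
    simp only [htdef]
    linarith
  have htmono : ∀ k, t k ≤ t (k + 1) := by
    intro k
    have h1 : (M - f x₁) / ((k : ℝ) + 1 + 1) ≤ (M - f x₁) / ((k : ℝ) + 1) := by
      gcongr
      · linarith
    simp only [htdef]
    push_cast
    linarith
  set K : ℕ → Set (EucN N) := fun k => {x | t k ≤ f x} with hK
  have hKne : ∀ k, (K k).Nonempty := by
    intro k
    obtain ⟨a, ⟨y, rfl⟩, hy⟩ := exists_lt_of_lt_csSup hne (htltM k)
    exact ⟨y, hy.le⟩
  have hKcc : ∀ k, IsCompact (K k) ∧ Convex ℝ (K k) := by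
    intro k
    rcases hf.2 (t k) (htpos k) with h | h
    · exact absurd (hKne k) (by rw [hK]; simp only [h]; exact Set.not_nonempty_empty)
    · exact h
  have hsub : ∀ k, K (k + 1) ⊆ K k := by
    intro k x hx
    exact le_trans (htmono k) hx
  obtain ⟨x₀, hx₀⟩ := IsCompact.nonempty_iInter_of_sequence_nonempty_isCompact_isClosed K hsub
    hKne (hKcc 0).1 (fun k => (hKcc k).1.isClosed)
  have hx₀t : ∀ k, t k ≤ f x₀ := fun k => Set.mem_iInter.mp hx₀ k
  refine ⟨x₀, fun x => ?_⟩
  by_contra hcon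
  push_neg at hcon
  have hx₀M : f x₀ < M := lt_of_lt_of_le hcon (hfleM x)
  obtain ⟨k, hk⟩ := exists_nat_gt ((M - f x₁) / (M - f x₀))
  have hkpos : (M - f x₁) / ((k : ℝ) + 1) < M - f x₀ := by
    rw [div_lt_iff₀ (by positivity)]
    have h2 : (M - f x₁) / (M - f x₀) < (k : ℝ) + 1 := lt_of_lt_of_le hk (by linarith)
    rw [div_lt_iff₀ (by linarith)] at h2
    linarith [h2]
  have : f x₀ < t k := by
    simp only [htdef]
    linarith
  linarith [hx₀t k]

/-- values of a quasi-concave function do not decrease when moving toward a maximiser at 0. -/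
lemma qc_ray {g : EucN N → ℝ} (hg : QuasiConcave g) (hmax : ∀ x, g x ≤ g 0)
    {s : ℝ} (hs0 : 0 ≤ s) (hs1 : s ≤ 1) (y : EucN N) : g y ≤ g (s • y) := by
  rcases eq_or_lt_of_le (hg.1 y) with h | h
  · rw [← h]
    exact hg.1 _
  · rcases hg.2 (g y) h with hemp | ⟨_, hconv⟩
    · exfalso
      have hy : y ∈ {x | g y ≤ g x} := by exact le_refl (g y)
      rw [hemp] at hy
      exact hy
    · have h0mem : (0 : EucN N) ∈ {x | g y ≤ g x} := hmax y
      have hymem : y ∈ {x : EucN N | g y ≤ g x} := by exact le_refl (g y)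
      have hmem := hconv h0mem hymem (by linarith : (0:ℝ) ≤ 1 - s) hs0 (by ring)
      have heq : (1 - s) • (0 : EucN N) + s • y = s • y := by simp
      rw [heq] at hmem
      exact hmem


lemma key {μ : (EucN N → ℝ) → ℝ} (hcont : ContinuousVal μ) (htrans : TransInvVal μ)
    (hhom : HomogVal 0 μ) {f : EucN N → ℝ} (hf : QuasiConcave f) {x₀ : EucN N}
    (hmax : ∀ x, f x ≤ f x₀) : μ f = μ (dirac N (f x₀)) := by
  set g : EucN N → ℝ := fun x => f (x + x₀) with hgdef
  have hg : QuasiConcave g := qc_translate hf x₀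
  have hg0 : g 0 = f x₀ := by simp [hgdef]
  have hgmax : ∀ x, g x ≤ g 0 := fun x => by rw [hg0]; exact hmax _
  have hμg : μ g = μ f := by
    have h := htrans f hf (-x₀)
    have heq : (fun x => f (x - -x₀)) = g := by
      funext x
      simp [hgdef, sub_neg_eq_add]
    rw [heq] at h
    exact h
  set F : ℕ → EucN N → ℝ := fun i x => g (((i : ℝ) + 1) • x) with hFdef
  have hFqc : ∀ i, QuasiConcave (F i) := fun i => qc_scale hg (by positivity)
  have hFμ : ∀ i, μ (F i) = μ g := by
    intro i
    have h := hhom g hg ((i : ℝ) + 1)⁻¹ (by positivity)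
    rw [inv_inv, pow_zero, one_mul] at h
    exact h
  have hanti : ∀ x, Antitone fun i => F i x := by
    intro x
    apply antitone_nat_of_succ_le
    intro i
    have hi2pos : (0 : ℝ) < (i : ℝ) + 2 := by positivity
    have hkey := qc_ray hg hgmax
      (s := ((i : ℝ) + 1) / ((i : ℝ) + 2)) (by positivity)
      (by rw [div_le_one hi2pos]; linarith) (((i : ℝ) + 2) • x)
    have hsmul : (((i : ℝ) + 1) / ((i : ℝ) + 2)) • (((i : ℝ) + 2) • x)
        = ((i : ℝ) + 1) • x := by
      rw [smul_smul]
      congr 1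
      field_simp
    rw [hsmul] at hkey
    show g ((((i + 1 : ℕ) : ℝ) + 1) • x) ≤ g (((i : ℝ) + 1) • x)
    have hc : (((i + 1 : ℕ) : ℝ) + 1) = (i : ℝ) + 2 := by push_cast; ring
    rw [hc]
    exact hkey
  have hδqc : QuasiConcave (dirac N (g 0)) := dirac_qc (hg.1 0)
  have htend : ∀ x, Tendsto (fun i => F i x) atTop (𝓝 (dirac N (g 0) x)) := by
    intro x
    rcases eq_or_ne x 0 with rfl | hx
    · have heq : (fun i : ℕ => F i (0 : EucN N)) = fun _ => g 0 := by
        funext i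
        show g (((i : ℝ) + 1) • (0 : EucN N)) = g 0
        rw [smul_zero]
      have hd : dirac N (g 0) 0 = g 0 := dirac_apply_zero _
      rw [heq, hd]
      exact tendsto_const_nhds
    · have hd : dirac N (g 0) x = 0 := dirac_apply_ne _ hx
      rw [hd]
      rw [Metric.tendsto_atTop]
      intro ε hε
      have hbound : ∃ n₀ : ℕ, ∀ n, n ≥ n₀ → g (((n : ℝ) + 1) • x) < ε := by
        rcases hg.2 ε hε with hemp | ⟨hcpt, _⟩
        · refine ⟨0, fun n _ => ?_⟩
          by_contra hcon
          push_neg at hcon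
          have hmem : ((n : ℝ) + 1) • x ∈ {y : EucN N | ε ≤ g y} := hcon
          rw [hemp] at hmem
          exact hmem
        · obtain ⟨R, hR⟩ := (Metric.isBounded_iff_subset_closedBall 0).1 hcpt.isBounded
          have hxpos : 0 < ‖x‖ := norm_pos_iff.mpr hx
          obtain ⟨n₀, hn₀⟩ := exists_nat_gt (R / ‖x‖)
          refine ⟨n₀, fun n hn => ?_⟩
          by_contra hcon
          push_neg at hcon
          have hmem : ((n : ℝ) + 1) • x ∈ closedBall (0 : EucN N) R := hR hcon
          rw [mem_closedBall, dist_zero_right, norm_smul, Real.norm_eq_abs,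
            abs_of_pos (by positivity)] at hmem
          have hn' : (n₀ : ℝ) ≤ (n : ℝ) := Nat.cast_le.mpr hn
          have h1 : R / ‖x‖ < (n : ℝ) + 1 := by linarith
          rw [div_lt_iff₀ hxpos] at h1
          linarith
      obtain ⟨n₀, hn₀⟩ := hbound
      refine ⟨n₀, fun n hn => ?_⟩
      have h0 : 0 ≤ F n x := hg.1 _
      have hlt : F n x < ε := hn₀ n hn
      rw [Real.dist_eq, sub_zero, abs_of_nonneg h0]
      exact hlt
  have hmain := hcont F (dirac N (g 0)) hFqc hδqc (Or.inr hanti) htend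
  have hconst : Tendsto (fun i => μ (F i)) atTop (𝓝 (μ g)) := by
    have heq : (fun i => μ (F i)) = fun _ => μ g := funext hFμ
    rw [heq]
    exact tendsto_const_nhds
  have huniq := tendsto_nhds_unique hmain hconst
  rw [← hμg, ← hg0]
  exact huniq.symm

end ZeroHomAux

/-- Every continuous, translation invariant, `0`-homogeneous valuation on
`C^N` is of the form `μ(f) = φ(max f)` for a continuous function `φ : [0,∞) → ℝ` with
`φ(0) = 0`. -/
theorem zero_homogeneous_characterization {N : ℕ} (μ : (EucN N → ℝ) → ℝ)
    (hval : IsValuationQC μ) (hcont : ContinuousVal μ) (htrans : TransInvVal μ)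
    (hhom : HomogVal 0 μ) :
    ∃ φ : ℝ → ℝ, ContinuousOn φ (Set.Ici 0) ∧ φ 0 = 0 ∧
      ∀ f : EucN N → ℝ, QuasiConcave f → μ f = φ (⨆ x : EucN N, f x) := by
  classical
  refine ⟨fun t => μ (ZeroHomAux.dirac N (max t 0)), ?_, ?_, ?_⟩
  · apply Continuous.continuousOn
    rw [continuous_iff_continuousAt]
    intro t
    have hT : Tendsto (fun s => μ (ZeroHomAux.dirac N (max s 0))) (𝓝 t)
        (𝓝 (μ (ZeroHomAux.dirac N (max t 0)))) := by
      rw [tendsto_iff_seq_tendsto]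
      intro u hu
      apply Filter.tendsto_of_subseq_tendsto
      intro ns hns
      obtain ⟨ms, hms, hmono⟩ := ZeroHomAux.exists_mono_subseq (fun n => u (ns n))
      refine ⟨ms, ?_⟩
      set w : ℕ → ℝ := fun n => u (ns (ms n)) with hw
      have huconv : Tendsto w atTop (𝓝 t) := hu.comp (hns.comp hms.tendsto_atTop)
      set F : ℕ → EucN N → ℝ := fun k => ZeroHomAux.dirac N (max (w k) 0) with hF
      have hFqc : ∀ k, QuasiConcave (F k) := fun k => ZeroHomAux.dirac_qc (le_max_right _ _)
      have htendp : ∀ x, Tendsto (fun k => F k x) atTop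
          (𝓝 (ZeroHomAux.dirac N (max t 0) x)) := by
        intro x
        rcases eq_or_ne x 0 with rfl | hx
        · have h1 : (fun k => F k (0 : EucN N)) = fun k => max (w k) 0 := by
            funext k
            simp only [hF]
            exact ZeroHomAux.dirac_apply_zero _
          have h2 : ZeroHomAux.dirac N (max t 0) 0 = max t 0 := ZeroHomAux.dirac_apply_zero _
          rw [h1, h2]
          exact huconv.max tendsto_const_nhds
        · have h1 : (fun k => F k x) = fun _ => (0 : ℝ) := by
            funext k
            simp only [hF]
            exact ZeroHomAux.dirac_apply_ne _ hx
          have h2 : ZeroHomAux.dirac N (max t 0) x = 0 := ZeroHomAux.dirac_apply_ne _ hx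
          rw [h1, h2]
          exact tendsto_const_nhds
      have hm : (∀ x, Monotone fun k => F k x) ∨ (∀ x, Antitone fun k => F k x) := by
        rcases hmono with hmon | hmon
        · left
          intro x k l hkl
          rcases eq_or_ne x 0 with rfl | hx
          · show F k 0 ≤ F l 0
            simp only [hF, ZeroHomAux.dirac_apply_zero]
            exact max_le_max (hmon hkl) le_rfl
          · show F k x ≤ F l x
            simp only [hF, ZeroHomAux.dirac_apply_ne _ hx]
            exact le_rfl
        · right
          intro x k l hkl
          rcases eq_or_ne x 0 with rfl | hx
          · show F l 0 ≤ F k 0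
            simp only [hF, ZeroHomAux.dirac_apply_zero]
            exact max_le_max (hmon hkl) le_rfl
          · show F l x ≤ F k x
            simp only [hF, ZeroHomAux.dirac_apply_ne _ hx]
            exact le_rfl
      exact hcont F (ZeroHomAux.dirac N (max t 0)) hFqc
        (ZeroHomAux.dirac_qc (le_max_right _ _)) hm htendp
    exact hT
  · show μ (ZeroHomAux.dirac N (max 0 0)) = 0
    have h1 : ZeroHomAux.dirac N (max (0 : ℝ) 0) = 0 := by
      funext x
      simp [ZeroHomAux.dirac]
    rw [h1]
    exact hval.1
  · intro f hf
    obtain ⟨x₀, hmax⟩ := ZeroHomAux.qc_exists_max hf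
    have hbdd : BddAbove (Set.range f) := ⟨f x₀, by rintro _ ⟨x, rfl⟩; exact hmax x⟩
    have hsup : (⨆ x, f x) = f x₀ := le_antisymm (ciSup_le hmax) (le_ciSup hbdd x₀)
    show μ f = μ (ZeroHomAux.dirac N (max (⨆ x, f x) 0))
    rw [hsup, max_eq_left (hf.1 x₀)]
    exact ZeroHomAux.key hcont htrans hhom hf hmax
end
end

section
/- Let μ : C^N → ℝ be a continuous and translation invariant valuation on the space C^N of quasi-concave functions, and fix t > 0. Define μ̃_t : K^N → ℝ by μ̃_t(K) = μ(t·I_K). Then μ̃_t is a translation invariant valuation on the space K^N of convex bodies, and it is continuous with respect to decreasing sequences: μ̃_t(K_i) → μ̃_t(K) whenever K_i is a decreasing sequence of convex bodies converging to K in the Hausdorff metric. -/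
open Filter Set MeasureTheory Metric
open scoped Topology Pointwise ENNReal NNReal

noncomputable section

lemma qc_indicator {N : ℕ} {K : Set (EucN N)} (hK : IsConvexBody K) {t : ℝ} (ht : 0 < t) :
    QuasiConcave (Set.indicator K fun _ => t) := by
  constructor
  · intro x
    by_cases hx : x ∈ K <;> simp [Set.indicator_apply, hx, ht.le]
  · intro s hs
    by_cases hst : s ≤ t
    · right
      have hset : {x | s ≤ Set.indicator K (fun _ => t) x} = K := by
        ext x
        by_cases hx : x ∈ K <;>
          simp [Set.indicator_apply, hx, hst, not_le.mpr hs]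
      rw [hset]
      exact ⟨hK.2.1, hK.2.2⟩
    · left
      ext x
      by_cases hx : x ∈ K <;> simp [Set.indicator_apply, hx, hst, not_le.mpr hs]

lemma ind_sup {N : ℕ} (K L : Set (EucN N)) {t : ℝ} (ht : 0 ≤ t) :
    (Set.indicator K fun _ => t) ⊔ (Set.indicator L fun _ => t) =
      Set.indicator (K ∪ L) fun _ => t := by
  funext x
  by_cases hK : x ∈ K <;> by_cases hL : x ∈ L <;>
    simp [Pi.sup_apply, Set.indicator_apply, hK, hL, sup_eq_left.mpr ht,
      sup_eq_right.mpr ht, sup_idem]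

lemma ind_inf {N : ℕ} (K L : Set (EucN N)) {t : ℝ} (ht : 0 ≤ t) :
    (Set.indicator K fun _ => t) ⊓ (Set.indicator L fun _ => t) =
      Set.indicator (K ∩ L) fun _ => t := by
  funext x
  by_cases hK : x ∈ K <;> by_cases hL : x ∈ L <;>
    simp [Pi.inf_apply, Set.indicator_apply, hK, hL, inf_eq_left.mpr ht,
      inf_eq_right.mpr ht, inf_idem]

/-- Remark 4.5. For a continuous, translation invariant valuation `μ` on
`C^N` and `t > 0`, the functional `K ↦ μ(t·I_K)` is a translation invariant valuation on `K^N`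
which is continuous along decreasing sequences of convex bodies. -/
theorem induced_body_valuation {N : ℕ} (μ : (EucN N → ℝ) → ℝ)
    (hval : IsValuationQC μ) (hcont : ContinuousVal μ) (htrans : TransInvVal μ)
    (t : ℝ) (ht : 0 < t) :
    IsValuationBody (fun K : Set (EucN N) => μ (Set.indicator K fun _ => t)) ∧
    (∀ K : Set (EucN N), IsConvexBody K → ∀ x₀ : EucN N,
      μ (Set.indicator ((fun x => x + x₀) '' K) fun _ => t) =
        μ (Set.indicator K fun _ => t)) ∧
    ∀ (K : ℕ → Set (EucN N)) (L : Set (EucN N)),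
      (∀ i, IsConvexBody (K i)) → IsConvexBody L → (∀ i, K (i + 1) ⊆ K i) →
      Tendsto (fun i => hausdorffDist (K i) L) atTop (𝓝 0) →
      Tendsto (fun i => μ (Set.indicator (K i) fun _ => t)) atTop
        (𝓝 (μ (Set.indicator L fun _ => t))) := by
  refine ⟨⟨?_, ?_⟩, ?_, ?_⟩
  · show μ (Set.indicator ∅ fun _ => t) = 0
    rw [Set.indicator_empty]; exact hval.1
  · intro K L hK hL hKL
    have h := hval.2 (Set.indicator K fun _ => t) (Set.indicator L fun _ => t)
      (qc_indicator hK ht) (qc_indicator hL ht) ?_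
    · rw [ind_sup K L ht.le, ind_inf K L ht.le] at h
      exact h
    · rw [ind_sup K L ht.le]
      exact qc_indicator hKL ht
  · intro K hK x₀
    have h := htrans (Set.indicator K fun _ => t) (qc_indicator hK ht) x₀
    rw [← h]
    congr 1
    funext x
    have hmem : x ∈ (fun y => y + x₀) '' K ↔ x - x₀ ∈ K := by
      constructor
      · rintro ⟨y, hy, rfl⟩; simpa using hy
      · intro hy; exact ⟨x - x₀, hy, by simp⟩
    by_cases hx : x - x₀ ∈ K
    · rw [Set.indicator_of_mem (hmem.mpr hx), Set.indicator_of_mem hx]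
    · rw [Set.indicator_of_notMem (fun h => hx (hmem.mp h)),
        Set.indicator_of_notMem hx]
  · intro K L hKi hL hdec hH
    have hKmono : Antitone K := antitone_nat_of_succ_le hdec
    have hedist : ∀ i, EMetric.hausdorffEdist (K i) L ≠ ⊤ := fun i =>
      Metric.hausdorffEdist_ne_top_of_nonempty_of_bounded (hKi i).1 hL.1
        (hKi i).2.1.isBounded hL.2.1.isBounded
    -- L ⊆ K i for every i
    have hsub : ∀ i, L ⊆ K i := by
      intro i x hx
      by_contra hxK
      have hpos : 0 < infDist x (K i) :=
        ((hKi i).2.1.isClosed.notMem_iff_infDist_pos (hKi i).1).mp hxK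
      have hev := (tendsto_order.mp hH).2 _ hpos
      rcases (hev.and (eventually_ge_atTop i)).exists with ⟨j, hj1, hj2⟩
      have h1 : infDist x (K j) ≤ hausdorffDist L (K j) :=
        infDist_le_hausdorffDist_of_mem hx
          (by rw [EMetric.hausdorffEdist_comm]; exact hedist j)
      have h2 : infDist x (K i) ≤ infDist x (K j) :=
        infDist_le_infDist_of_subset (hKmono hj2) (hKi j).1
      rw [hausdorffDist_comm] at h1
      linarith
    -- pointwise limit
    refine hcont _ _ (fun i => qc_indicator (hKi i) ht) (qc_indicator hL ht)
      (Or.inr ?_) ?_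
    · intro x i j hij
      dsimp only
      by_cases hx : x ∈ K j
      · rw [Set.indicator_of_mem hx, Set.indicator_of_mem (hKmono hij hx)]
      · rw [Set.indicator_of_notMem hx]
        by_cases hx' : x ∈ K i
        · rw [Set.indicator_of_mem hx']; exact ht.le
        · rw [Set.indicator_of_notMem hx']
    · intro x
      by_cases hx : x ∈ L
      · have : ∀ i, Set.indicator (K i) (fun _ => t) x = t := fun i =>
          Set.indicator_of_mem (hsub i hx) _
        simp only [this, Set.indicator_of_mem hx]
        exact tendsto_const_nhds
      · have hpos : 0 < infDist x L :=
          (hL.2.1.isClosed.notMem_iff_infDist_pos hL.1).mp hx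
        have hev := (tendsto_order.mp hH).2 _ hpos
        rw [Set.indicator_of_notMem hx]
        refine Tendsto.congr' ?_ tendsto_const_nhds
        filter_upwards [hev] with i hi
        have hxK : x ∉ K i := by
          intro hxK
          have := infDist_le_hausdorffDist_of_mem hxK (hedist i)
          linarith
        rw [Set.indicator_of_notMem hxK]
end
end

section
/- Let μ : C^N → ℝ be a continuous valuation on the space C^N of quasi-concave functions and let c : (0,∞) → ℝ be such that μ(t·I_K) = c(t)·Vol_N(K) for every t > 0 and every convex body K. Then for every simple function f = t_1·I_{K_1} ∨ ⋯ ∨ t_m·I_{K_m}, where 0 < t_1 < ⋯ < t_m and K_1 ⊃ K_2 ⊃ ⋯ ⊃ K_m are convex bodies, one has μ(f) = Σ_{i=1}^{m−1} c(t_i)·(Vol_N(K_i) − Vol_N(K_{i+1})) + c(t_m)·Vol_N(K_m). -/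
open Filter Set MeasureTheory Metric
open scoped Topology Pointwise ENNReal NNReal

noncomputable section

/-- An indicator of a convex body with positive height is quasi-concave. -/
lemma indicQC {N : ℕ} {K : Set (EucN N)} (hK : IsConvexBody K) {t : ℝ} (ht : 0 < t) :
    QuasiConcave (K.indicator fun _ => t) := by
  constructor
  · intro x; exact Set.indicator_nonneg (fun _ _ => ht.le) x
  · intro s hs
    by_cases hst : s ≤ t
    · right
      have hset : {x | s ≤ K.indicator (fun _ => t) x} = K := by
        ext x
        by_cases hx : x ∈ K
        · simp [Set.indicator_of_mem hx, hst, hx]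
        · simp [Set.indicator_of_notMem hx, hx, not_le.mpr hs]
      rw [hset]; exact ⟨hK.2.1, hK.2.2⟩
    · left
      ext x
      by_cases hx : x ∈ K
      · simp [Set.indicator_of_mem hx, hst]
      · simp [Set.indicator_of_notMem hx, not_le.mpr hs]

/-- A simple function built from a decreasing chain of convex bodies with nonnegative
heights is quasi-concave. -/
lemma simpleQC {N n : ℕ} (t : Fin (n + 1) → ℝ) (K : Fin (n + 1) → Set (EucN N))
    (ht : ∀ i, 0 ≤ t i) (hK : ∀ i, IsConvexBody (K i))
    (hmono : ∀ i j : Fin (n + 1), i ≤ j → K j ⊆ K i) :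
    QuasiConcave (fun x => Finset.univ.sup' Finset.univ_nonempty
      fun i : Fin (n + 1) => Set.indicator (K i) (fun _ => t i) x) := by
  constructor
  · intro x
    refine le_trans ?_ (Finset.le_sup' _ (Finset.mem_univ (0 : Fin (n + 1))))
    exact Set.indicator_nonneg (fun _ _ => ht 0) x
  · intro s hs
    by_cases h : ∃ i, s ≤ t i
    · right
      set S : Finset (Fin (n + 1)) := Finset.univ.filter (fun i => s ≤ t i) with hS
      have hSne : S.Nonempty := by
        obtain ⟨i, hi⟩ := h
        exact ⟨i, by simp [hS, hi]⟩
      set i₀ := S.min' hSne with hi₀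
      have hi₀S : i₀ ∈ S := Finset.min'_mem _ _
      have hi₀t : s ≤ t i₀ := (Finset.mem_filter.mp hi₀S).2
      have hset : {x | s ≤ Finset.univ.sup' Finset.univ_nonempty
          fun i : Fin (n + 1) => Set.indicator (K i) (fun _ => t i) x} = K i₀ := by
        ext x
        simp only [Set.mem_setOf_eq, Finset.le_sup'_iff, Finset.mem_univ, true_and]
        constructor
        · rintro ⟨i, hi⟩
          by_cases hx : x ∈ K i
          · rw [Set.indicator_of_mem hx] at hi
            have hiS : i ∈ S := by simp [hS, hi]
            exact hmono i₀ i (Finset.min'_le _ _ hiS) hx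
          · rw [Set.indicator_of_notMem hx] at hi
            exact absurd hi (not_le.mpr hs)
        · intro hx
          exact ⟨i₀, by rw [Set.indicator_of_mem hx]; exact hi₀t⟩
      rw [hset]; exact ⟨(hK i₀).2.1, (hK i₀).2.2⟩
    · left
      push_neg at h
      ext x
      simp only [Set.mem_setOf_eq, Finset.le_sup'_iff, Finset.mem_univ, true_and,
        Set.mem_empty_iff_false, iff_false, not_exists, not_le]
      intro i
      by_cases hx : x ∈ K i
      · rw [Set.indicator_of_mem hx]; exact h i
      · rw [Set.indicator_of_notMem hx]; exact hs

/-- Splitting a `sup'` over `Fin (n+2)` into the first `n+1` terms and the last one. -/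
lemma sup'_univ_castSucc {α : Type*} [LinearOrder α] {n : ℕ} (a : Fin (n + 2) → α) :
    Finset.univ.sup' Finset.univ_nonempty a =
      (Finset.univ.sup' Finset.univ_nonempty fun i : Fin (n + 1) => a i.castSucc) ⊔
        a (Fin.last (n + 1)) := by
  apply le_antisymm
  · apply Finset.sup'_le
    intro i _
    induction i using Fin.lastCases with
    | last => exact le_sup_right
    | cast j => exact le_sup_of_le_left (Finset.le_sup' (fun i : Fin (n + 1) => a i.castSucc)
        (Finset.mem_univ j))
  · apply sup_le
    · apply Finset.sup'_le
      intro j _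
      exact Finset.le_sup' a (Finset.mem_univ j.castSucc)
    · exact Finset.le_sup' a (Finset.mem_univ (Fin.last (n + 1)))

lemma aux_simple {N : ℕ} (μ : (EucN N → ℝ) → ℝ) (hval : IsValuationQC μ) (c : ℝ → ℝ)
    (hc : ∀ t : ℝ, 0 < t → ∀ K : Set (EucN N), IsConvexBody K →
      μ (Set.indicator K fun _ => t) = c t * (volume K).toReal)
    (m : ℕ) :
    ∀ (t : Fin (m + 1) → ℝ) (K : Fin (m + 1) → Set (EucN N)),
      0 < t 0 → StrictMono t → (∀ i, IsConvexBody (K i)) →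
      (∀ i j : Fin (m + 1), i < j → K j ⊂ K i) →
      μ (fun x => Finset.univ.sup' Finset.univ_nonempty
          fun i : Fin (m + 1) => Set.indicator (K i) (fun _ => t i) x) =
        (∑ i : Fin m,
            c (t i.castSucc) * ((volume (K i.castSucc)).toReal - (volume (K i.succ)).toReal)) +
          c (t (Fin.last m)) * (volume (K (Fin.last m))).toReal := by
  induction m with
  | zero =>
    intro t K ht0 _ hK _
    have hfe : (fun x => Finset.univ.sup' Finset.univ_nonempty
        fun i : Fin 1 => Set.indicator (K i) (fun _ => t i) x) =
        Set.indicator (K 0) fun _ => t 0 := by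
      funext x
      simp [Finset.univ_unique]
    rw [hfe]
    simp only [Finset.univ_eq_empty, Finset.sum_empty, zero_add]
    have : Fin.last 0 = 0 := rfl
    rw [this]
    exact hc (t 0) ht0 (K 0) (hK 0)
  | succ m ih =>
    intro t K ht0 htm hK hch
    -- positivity of all heights
    have htpos : ∀ i, 0 < t i := fun i => lt_of_lt_of_le ht0 (htm.monotone (Fin.zero_le i))
    have hKmono : ∀ i j : Fin (m + 2), i ≤ j → K j ⊆ K i := by
      intro i j hij
      rcases eq_or_lt_of_le hij with h | h
      · rw [h]
      · exact (hch i j h).subset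
    -- the truncated function, the top indicator, and the inf
    set f' : EucN N → ℝ := fun x => Finset.univ.sup' Finset.univ_nonempty
      fun i : Fin (m + 1) => Set.indicator (K i.castSucc) (fun _ => t i.castSucc) x with hf'
    set g : EucN N → ℝ :=
      Set.indicator (K (Fin.last (m + 1))) (fun _ => t (Fin.last (m + 1))) with hg
    set h : EucN N → ℝ :=
      Set.indicator (K (Fin.last (m + 1))) (fun _ => t ((Fin.last m).castSucc)) with hh
    have hf'QC : QuasiConcave f' := by
      refine simpleQC _ _ (fun i => (htpos _).le) (fun i => hK _) ?_
      intro i j hij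
      exact hKmono _ _ (by exact Fin.castSucc_le_castSucc_iff.mpr hij)
    have hgQC : QuasiConcave g := indicQC (hK _) (htpos _)
    -- pointwise identity: f' ⊔ g is the full simple function
    have hsup : f' ⊔ g = (fun x => Finset.univ.sup' Finset.univ_nonempty
        fun i : Fin (m + 2) => Set.indicator (K i) (fun _ => t i) x) := by
      funext x
      have := sup'_univ_castSucc (fun i : Fin (m + 2) => Set.indicator (K i) (fun _ => t i) x)
      simp only [Pi.sup_apply, hf', hg]
      rw [this]
    -- pointwise identity: f' ⊓ g = h
    have hmemall : ∀ x ∈ K (Fin.last (m + 1)), ∀ i : Fin (m + 1), x ∈ K i.castSucc := by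
      intro x hx i
      exact hKmono _ _ (Fin.castSucc_lt_last i).le hx
    have hinf : f' ⊓ g = h := by
      funext x
      simp only [Pi.inf_apply]
      by_cases hx : x ∈ K (Fin.last (m + 1))
      · have hf'x : f' x = t ((Fin.last m).castSucc) := by
          simp only [hf']
          apply le_antisymm
          · apply Finset.sup'_le
            intro i _
            rw [Set.indicator_of_mem (hmemall x hx i)]
            exact htm.monotone (Fin.castSucc_le_castSucc_iff.mpr (Fin.le_last i))
          · refine le_trans ?_ (Finset.le_sup' _ (Finset.mem_univ (Fin.last m)))
            rw [Set.indicator_of_mem (hmemall x hx (Fin.last m))]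
        have hgx : g x = t (Fin.last (m + 1)) := Set.indicator_of_mem hx _
        have hhx : h x = t ((Fin.last m).castSucc) := Set.indicator_of_mem hx _
        rw [hf'x, hgx, hhx]
        exact min_eq_left (htm.monotone (Fin.castSucc_lt_last (Fin.last m)).le)
      · have hgx : g x = 0 := Set.indicator_of_notMem hx _
        have hhx : h x = 0 := Set.indicator_of_notMem hx _
        rw [hgx, hhx]
        exact min_eq_right (hf'QC.1 x)
    have hsupQC : QuasiConcave (f' ⊔ g) := by
      rw [hsup]
      exact simpleQC t K (fun i => (htpos i).le) hK hKmono
    -- the valuation identity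
    have hvaleq := hval.2 f' g hf'QC hgQC hsupQC
    rw [hsup, hinf] at hvaleq
    -- values of μ on g and h
    have hμg : μ g = c (t (Fin.last (m + 1))) * (volume (K (Fin.last (m + 1)))).toReal :=
      hc _ (htpos _) _ (hK _)
    have hμh : μ h = c (t ((Fin.last m).castSucc)) * (volume (K (Fin.last (m + 1)))).toReal :=
      hc _ (htpos _) _ (hK _)
    -- inductive hypothesis for f'
    have hμf' := ih (fun i => t i.castSucc) (fun i => K i.castSucc)
      (by simpa using ht0)
      (htm.comp Fin.strictMono_castSucc)
      (fun i => hK _)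
      (fun i j hij => hch _ _ (Fin.castSucc_lt_castSucc_iff.mpr hij))
    change μ f' = _ at hμf'
    -- now assemble
    rw [Fin.sum_univ_castSucc
      (f := fun i : Fin (m + 1) =>
        c (t i.castSucc) * ((volume (K i.castSucc)).toReal - (volume (K i.succ)).toReal))]
    have hrw : ∀ i : Fin m,
        c (t i.castSucc.castSucc) * ((volume (K i.castSucc.castSucc)).toReal -
          (volume (K i.castSucc.succ)).toReal) =
        c (t i.castSucc.castSucc) * ((volume (K i.castSucc.castSucc)).toReal -
          (volume (K i.succ.castSucc)).toReal) := by
      intro i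
      rw [Fin.succ_castSucc]
    rw [Finset.sum_congr rfl (fun i _ => hrw i)]
    have hlast : (Fin.last m).succ = Fin.last (m + 1) := Fin.succ_last m
    rw [hlast]
    linarith [hvaleq, hμg, hμh, hμf']

/-- If a continuous valuation `μ` on `C^N` satisfies
`μ(t·I_K) = c(t)·Vol_N(K)` for all `t > 0` and all convex bodies `K`, then for every simple
function `f = t_1·I_{K_1} ∨ ⋯ ∨ t_m·I_{K_m}` (with `0 < t_1 < ⋯ < t_m` and
`K_1 ⊃ ⋯ ⊃ K_m`) one has
`μ(f) = Σ_{i=1}^{m-1} c(t_i)(Vol_N(K_i) − Vol_N(K_{i+1})) + c(t_m) Vol_N(K_m)`. -/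
theorem valuation_on_simple_functions {N : ℕ} (μ : (EucN N → ℝ) → ℝ)
    (hval : IsValuationQC μ) (hcont : ContinuousVal μ) (c : ℝ → ℝ)
    (hc : ∀ t : ℝ, 0 < t → ∀ K : Set (EucN N), IsConvexBody K →
      μ (Set.indicator K fun _ => t) = c t * (volume K).toReal)
    (m : ℕ) (t : Fin (m + 1) → ℝ) (K : Fin (m + 1) → Set (EucN N))
    (ht0 : 0 < t 0) (htmono : StrictMono t)
    (hK : ∀ i, IsConvexBody (K i))
    (hKchain : ∀ i j : Fin (m + 1), i < j → K j ⊂ K i) :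
    μ (fun x => Finset.univ.sup' Finset.univ_nonempty
        fun i : Fin (m + 1) => Set.indicator (K i) (fun _ => t i) x) =
      (∑ i : Fin m,
          c (t i.castSucc) * ((volume (K i.castSucc)).toReal - (volume (K i.succ)).toReal)) +
        c (t (Fin.last m)) * (volume (K (Fin.last m))).toReal := by
  exact aux_simple μ hval c hc m t K ht0 htmono hK hKchain
end
end
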